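/- Let π: Γ̃ → Γ be a dilated harmonic double cover in which the dilated edge e ∈ E(Γ) is neither a bridge nor a loop of Γ. Then its preimage ẽ = π^{-1}(e) is neither a bridge nor a loop of Γ̃. -/

import Mathlib

open scoped Classical
noncomputable section

/-- A (model of a) metric graph: a finite (multi)graph with oriented edges
and positive edge lengths. -/
structure MGraph where
  V : Type
  E : Type
  [fintV : Fintype V]
  [fintE : Fintype E]
  s : E → V
  t : E → V
  len : E → ℝ
  len_pos : ∀ e, 0 < len e

attribute [instance] MGraph.fintV MGraph.fintE

namespace MGraph

/-- Two vertices are adjacent if some edge joins them. -/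
def Adj (G : MGraph) (u v : G.V) : Prop :=
  ∃ e : G.E, (G.s e = u ∧ G.t e = v) ∨ (G.s e = v ∧ G.t e = u)

/-- Reachability by walks. -/
def Reach (G : MGraph) : G.V → G.V → Prop :=
  Relation.ReflTransGen G.Adj

/-- A graph is connected if it is nonempty and any two vertices are joined by a walk. -/
def Connected (G : MGraph) : Prop :=
  Nonempty G.V ∧ ∀ u v : G.V, G.Reach u v

/-- The genus (first Betti number) of a connected graph: #E - #V + 1. -/
def genus (G : MGraph) : ℤ :=
  (Fintype.card G.E : ℤ) - (Fintype.card G.V : ℤ) + 1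

/-- The number of connected components. -/
def numComponents (G : MGraph) : ℕ :=
  Nat.card (Quot G.Reach)

/-- A tree is a connected graph with #V = #E + 1. -/
def IsTree (G : MGraph) : Prop :=
  G.Connected ∧ Fintype.card G.E + 1 = Fintype.card G.V

/-- A loop is an edge whose endpoints coincide. -/
def IsLoop (G : MGraph) (e : G.E) : Prop := G.s e = G.t e

/-- Delete a set of edges. -/
def deleteEdges (G : MGraph) (F : Set G.E) : MGraph where
  V := G.V
  E := {e : G.E // e ∉ F}
  fintV := G.fintV
  fintE := Fintype.ofFinite _
  s e := G.s e.1
  t e := G.t e.1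
  len e := G.len e.1
  len_pos e := G.len_pos e.1

/-- A bridge is an edge whose deletion disconnects the graph. -/
def IsBridge (G : MGraph) (e : G.E) : Prop :=
  ¬ (G.deleteEdges {e}).Connected

/-- Contract a set of edges: identify the endpoints of each edge of `F` and
remove the edges of `F`. -/
def contractEdges (G : MGraph) (F : Set G.E) : MGraph where
  V := Quot (fun u v : G.V => ∃ e ∈ F, G.s e = u ∧ G.t e = v)
  E := {e : G.E // e ∉ F}
  fintV := Fintype.ofFinite _
  fintE := Fintype.ofFinite _
  s e := Quot.mk _ (G.s e.1)
  t e := Quot.mk _ (G.t e.1)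
  len e := G.len e.1
  len_pos e := G.len_pos e.1

/-- The subgraph induced on a set of vertices (with all edges joining them). -/
def inducedOn (G : MGraph) (S : Set G.V) : MGraph where
  V := {v : G.V // v ∈ S}
  E := {e : G.E // G.s e ∈ S ∧ G.t e ∈ S}
  fintV := Fintype.ofFinite _
  fintE := Fintype.ofFinite _
  s e := ⟨G.s e.1, e.2.1⟩
  t e := ⟨G.t e.1, e.2.2⟩
  len e := G.len e.1
  len_pos e := G.len_pos e.1

/-- The connected component of a vertex, as a set of vertices. -/
def componentOf (G : MGraph) (v : G.V) : Set G.V := {u : G.V | G.Reach v u}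

/-- The Jacobian polynomial of a metric graph: the sum, over all `g`-element
sets `C` of edges whose complement is a spanning tree, of the product of the
lengths of the edges of `C`. -/
def jacPoly (G : MGraph) : ℝ :=
  ∑ C : Finset G.E,
    if (C.card : ℤ) = G.genus ∧ (G.deleteEdges (↑C)).IsTree then ∏ e ∈ C, G.len e else 0

end MGraph

/-- A harmonic double cover of metric graphs, encoded by the projection
together with its deck involution.  A vertex or edge downstairs is *dilated*
if its fiber is a single (involution-fixed) point; dilated edges have
half the length of their image. -/
structure DoubleCover (Gt G : MGraph) where
  πV : Gt.V → G.V
  πE : Gt.E → G.E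
  ιV : Gt.V → Gt.V
  ιE : Gt.E → Gt.E
  ιV_invol : ∀ w, ιV (ιV w) = w
  ιE_invol : ∀ f, ιE (ιE f) = f
  πV_ι : ∀ w, πV (ιV w) = πV w
  πE_ι : ∀ f, πE (ιE f) = πE f
  s_comm : ∀ f, G.s (πE f) = πV (Gt.s f)
  t_comm : ∀ f, G.t (πE f) = πV (Gt.t f)
  s_ι : ∀ f, Gt.s (ιE f) = ιV (Gt.s f)
  t_ι : ∀ f, Gt.t (ιE f) = ιV (Gt.t f)
  πV_surj : Function.Surjective πV
  πE_surj : Function.Surjective πE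
  fiberV : ∀ w w', πV w' = πV w → w' = w ∨ w' = ιV w
  fiberE : ∀ f f', πE f' = πE f → f' = f ∨ f' = ιE f
  len_eq : ∀ f, Gt.len f = if ιE f = f then G.len (πE f) / 2 else G.len (πE f)

namespace DoubleCover

variable {Gt G : MGraph} (dc : DoubleCover Gt G)

/-- A vertex of the base is dilated if it has a unique (involution-fixed) preimage. -/
def dilatedV (v : G.V) : Prop := ∃ w, dc.πV w = v ∧ dc.ιV w = w

/-- An edge of the base is dilated if it has a unique (involution-fixed) preimage. -/
def dilatedE (e : G.E) : Prop := ∃ f, dc.πE f = e ∧ dc.ιE f = f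

/-- A double cover is free if it has no dilated vertices (hence no dilated edges). -/
def IsFree : Prop := ∀ v : G.V, ¬ dc.dilatedV v

/-- A double cover is dilated if it has a dilated vertex. -/
def IsDilated : Prop := ∃ v : G.V, dc.dilatedV v

/-- A double cover is edge-free if its dilation subgraph consists of isolated
vertices only, i.e. there are no dilated edges. -/
def IsEdgeFree : Prop := ∀ e : G.E, ¬ dc.dilatedE e

/-- The dilation subgraph: the subgraph of the base consisting of all dilated
vertices and dilated edges. -/
def dilSubgraph : MGraph where
  V := {v : G.V // dc.dilatedV v}
  E := {e : G.E // dc.dilatedE e}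
  fintV := Fintype.ofFinite _
  fintE := Fintype.ofFinite _
  s e := ⟨G.s e.1, by
    obtain ⟨f, hf, hfix⟩ := e.2
    exact ⟨Gt.s f, by rw [← hf, dc.s_comm], by rw [← dc.s_ι, hfix]⟩⟩
  t e := ⟨G.t e.1, by
    obtain ⟨f, hf, hfix⟩ := e.2
    exact ⟨Gt.t f, by rw [← hf, dc.t_comm], by rw [← dc.t_ι, hfix]⟩⟩
  len e := G.len e.1
  len_pos e := G.len_pos e.1

/-- The number of dilated edges. -/
def md : ℕ := Nat.card {e : G.E // dc.dilatedE e}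

/-- The number of dilated vertices. -/
def nd : ℕ := Nat.card {v : G.V // dc.dilatedV v}

/-- The number of connected components of the dilation subgraph. -/
def numDilComponents : ℕ := dc.dilSubgraph.numComponents

/-- The connected component of `v` in `Γ ∖ F` has connected preimage in `Γ̃ ∖ π⁻¹(F)`. -/
def hasConnPreimage (F : Set G.E) (v : G.V) : Prop :=
  ((Gt.deleteEdges (dc.πE ⁻¹' F)).inducedOn
    {w : Gt.V | dc.πV w ∈ (G.deleteEdges F).componentOf v}).Connected

/-- An ogod (odd genus one decomposition): a set of `h = g(Γ̃) - g(Γ)` undilated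
edges of the base such that every connected component of the complement has
connected preimage. -/
def IsOgod (F : Finset G.E) : Prop :=
  (F.card : ℤ) = Gt.genus - G.genus ∧
  (∀ e ∈ F, ¬ dc.dilatedE e) ∧
  ∀ v : G.V, dc.hasConnPreimage (↑F) v

/-- The rank of an ogod: the number of connected components of `Γ ∖ F`. -/
def rank (_π : DoubleCover Gt G) (F : Finset G.E) : ℕ := (G.deleteEdges (↑F)).numComponents

/-- The Prym polynomial of a double cover. -/
def prymPoly : ℝ :=
  ∑ F : Finset G.E,
    if dc.IsOgod F then (4 : ℝ) ^ (dc.rank F - 1) * ∏ e ∈ F, G.len e else 0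

end DoubleCover

theorem MGraph.adj_symm' (G : MGraph) {u v : G.V} (h : G.Adj u v) : G.Adj v u := by
  obtain ⟨e, h⟩ := h; exact ⟨e, h.symm⟩

theorem MGraph.reach_symm' (G : MGraph) {u v : G.V} (h : G.Reach u v) : G.Reach v u := by
  induction h with
  | refl => exact .refl
  | tail _ h ih => exact .trans (.single (G.adj_symm' h)) ih

theorem DoubleCover.lift_adj {Gt G : MGraph} (dc : DoubleCover Gt G) (e : G.E) (f : Gt.E)
    (hfe : dc.πE f = e) {c d : G.V} (h : (G.deleteEdges {e}).Adj c d)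
    (w : Gt.V) (hw : dc.πV w = c) :
    ∃ w' : Gt.V, dc.πV w' = d ∧ (Gt.deleteEdges {f}).Adj w w' := by
  obtain ⟨⟨e', hne⟩, he'⟩ := h
  obtain ⟨f', hf'⟩ := dc.πE_surj e'
  have hfne : ∀ g : Gt.E, dc.πE g = e' → g ≠ f := by
    intro g hg hgf
    exact hne (by simp only [Set.mem_singleton_iff]; rw [← hg, hgf, hfe])
  rcases he' with ⟨hs, ht⟩ | ⟨hs, ht⟩
  · replace hs : G.s e' = c := hs
    replace ht : G.t e' = d := ht
    have h1 : dc.πV (Gt.s f') = dc.πV w := by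
      rw [hw, ← hs, ← hf', dc.s_comm]
    rcases dc.fiberV w (Gt.s f') h1 with h2 | h2
    · refine ⟨Gt.t f', ?_, ⟨⟨f', fun hh => hfne f' hf' hh⟩, Or.inl ⟨h2, rfl⟩⟩⟩
      rw [← dc.t_comm, hf', ht]
    · refine ⟨Gt.t (dc.ιE f'), ?_, ⟨⟨dc.ιE f', fun hh => hfne _ (by rw [dc.πE_ι, hf']) hh⟩,
        Or.inl ⟨?_, rfl⟩⟩⟩
      · rw [← dc.t_comm, dc.πE_ι, hf', ht]
      · show Gt.s (dc.ιE f') = w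
        rw [dc.s_ι, h2, dc.ιV_invol]
  · replace hs : G.s e' = d := hs
    replace ht : G.t e' = c := ht
    have h1 : dc.πV (Gt.t f') = dc.πV w := by
      rw [hw, ← ht, ← hf', dc.t_comm]
    rcases dc.fiberV w (Gt.t f') h1 with h2 | h2
    · refine ⟨Gt.s f', ?_, ⟨⟨f', fun hh => hfne f' hf' hh⟩, Or.inr ⟨rfl, h2⟩⟩⟩
      rw [← dc.s_comm, hf', hs]
    · refine ⟨Gt.s (dc.ιE f'), ?_, ⟨⟨dc.ιE f', fun hh => hfne _ (by rw [dc.πE_ι, hf']) hh⟩,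
        Or.inr ⟨rfl, ?_⟩⟩⟩
      · rw [← dc.s_comm, dc.πE_ι, hf', hs]
      · show Gt.t (dc.ιE f') = w
        rw [dc.t_ι, h2, dc.ιV_invol]

theorem DoubleCover.lift_reach {Gt G : MGraph} (dc : DoubleCover Gt G) (e : G.E) (f : Gt.E)
    (hfe : dc.πE f = e) {a b : G.V} (h : (G.deleteEdges {e}).Reach a b) :
    ∀ w : Gt.V, dc.πV w = a → ∃ w' : Gt.V, dc.πV w' = b ∧ (Gt.deleteEdges {f}).Reach w w' := by
  induction h with
  | refl => exact fun w hw => ⟨w, hw, .refl⟩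
  | tail _ hadj ih =>
    intro w hw
    obtain ⟨w', hw', hr⟩ := ih w hw
    obtain ⟨w'', hw'', hadj'⟩ := dc.lift_adj e f hfe hadj w' hw'
    exact ⟨w'', hw'', hr.tail hadj'⟩

/-- **Statement 13.**  If the dilated edge `e` of a dilated harmonic double cover
`π : Γ̃ → Γ` is neither a bridge nor a loop of `Γ`, then its (unique) preimage
`ẽ = π⁻¹(e)` is neither a bridge nor a loop of `Γ̃`. -/
theorem preimage_of_dilated_edge_not_bridge_not_loop
    (Gt G : MGraph) (dc : DoubleCover Gt G)
    (hGt : Gt.Connected) (hG : G.Connected) (hdil : dc.IsDilated)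
    (e : G.E) (he : dc.dilatedE e)
    (hloop : ¬ G.IsLoop e) (hbridge : ¬ G.IsBridge e) :
    ∀ f : Gt.E, dc.πE f = e → ¬ Gt.IsLoop f ∧ ¬ Gt.IsBridge f := by
  intro f hfe
  obtain ⟨f₀, hf₀, hfix₀⟩ := he
  have hff₀ : f = f₀ := by
    rcases dc.fiberE f₀ f (by rw [hfe, hf₀]) with h | h
    · exact h
    · rw [h, hfix₀]
  have hfix : dc.ιE f = f := by rw [hff₀, hfix₀]
  constructor
  · intro h
    apply hloop
    show G.s e = G.t e
    rw [← hfe, dc.s_comm, dc.t_comm, h]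
  · intro hbr
    apply hbr
    have hGconn : (G.deleteEdges {e}).Connected := not_not.mp hbridge
    set x : Gt.V := Gt.s f with hx
    have hxfix : dc.ιV x = x := by rw [← dc.s_ι, hfix]
    have key : ∀ w : Gt.V, (Gt.deleteEdges {f}).Reach w x := by
      intro w
      obtain ⟨w', hw', hr⟩ :=
        dc.lift_reach e f hfe (hGconn.2 (dc.πV w) (dc.πV x)) w rfl
      rcases dc.fiberV x w' hw' with h2 | h2
      · rwa [← h2]
      · rw [h2, hxfix] at hr; exact hr
    exact ⟨hGt.1, fun u v => (key u).trans ((Gt.deleteEdges {f}).reach_symm' (key v))⟩
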